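/- In SL₃(ℝ), with x(a) = [[1,a,0],[0,1,0],[0,0,1]] and y(b) = [[1,0,0],[0,1,b],[0,0,1]] for a,b > 0, the images of the maps (a,b,c) ↦ x(a)y(b)x(c) and (a',b',c') ↦ y(a')x(b')y(c') from (ℝ_{>0})³ coincide. -/
import Mathlib

open Matrix

def xm (a : ℝ) : Matrix (Fin 3) (Fin 3) ℝ := !![1, a, 0; 0, 1, 0; 0, 0, 1]

def ym (b : ℝ) : Matrix (Fin 3) (Fin 3) ℝ := !![1, 0, 0; 0, 1, b; 0, 0, 1]

lemma key (a b c : ℝ) (ha : 0 < a) (hc : 0 < c) :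
    xm a * ym b * xm c = ym (b*c/(a+c)) * xm (a+c) * ym (a*b/(a+c)) := by
  have h : a + c ≠ 0 := by positivity
  simp only [xm, ym]
  ext i j
  fin_cases i <;> fin_cases j <;>
    simp [Matrix.mul_apply, Fin.sum_univ_succ] <;> (try field_simp) <;> (try ring)

/-- The two reduced-expression parametrizations of the top cell have the same
image: {x(a)y(b)x(c)} = {y(a')x(b')y(c')} over positive parameters. -/
theorem stmt_15 :
    {M : Matrix (Fin 3) (Fin 3) ℝ |
        ∃ a b c : ℝ, 0 < a ∧ 0 < b ∧ 0 < c ∧ M = xm a * ym b * xm c} =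
    {M : Matrix (Fin 3) (Fin 3) ℝ |
        ∃ a b c : ℝ, 0 < a ∧ 0 < b ∧ 0 < c ∧ M = ym a * xm b * ym c} := by
  have key' : ∀ a b c : ℝ, 0 < a → 0 < c →
      ym a * xm b * ym c = xm (b*c/(a+c)) * ym (a+c) * xm (a*b/(a+c)) := by
    intro a b c ha hc
    have h : a + c ≠ 0 := by positivity
    simp only [xm, ym]
    ext i j
    fin_cases i <;> fin_cases j <;>
      simp [Matrix.mul_apply, Fin.sum_univ_succ] <;> (try field_simp) <;> (try ring)
  ext M
  constructor
  · rintro ⟨a, b, c, ha, hb, hc, rfl⟩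
    exact ⟨b*c/(a+c), a+c, a*b/(a+c), by positivity, by positivity, by positivity,
      key a b c ha hc⟩
  · rintro ⟨a, b, c, ha, hb, hc, rfl⟩
    exact ⟨b*c/(a+c), a+c, a*b/(a+c), by positivity, by positivity, by positivity,
      key' a b c ha hc⟩
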